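/- Let X be a real Banach space whose dual space X* is separable, let G ⊆ X be an open set and let f : G → ℝ be a Lipschitz function. Let A be the set of all points x ∈ G such that f is Fréchet superdifferentiable at x and f is not Fréchet differentiable at x. Then A is σ-upper porous. -/

import Mathlib

open Metric Filter Set Topology TopologicalSpace NNReal ENNReal

/-- `porosityGamma A x R` is the supremum of all radii `r ≥ 0` for which there exists `z`
with the open ball `U(z,r)` contained in `U(x,R) \ A`. -/
noncomputable def porosityGamma {X : Type*} [MetricSpace X] (A : Set X) (x : X) (R : ℝ) :
    ℝ≥0∞ :=
  ⨆ (r : ℝ≥0) (_ : ∃ z : X, Metric.ball z (r : ℝ) ⊆ Metric.ball x R \ A), (r : ℝ≥0∞)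

/-- `A` is upper porous at `x` if `limsup_{R→0+} γ(x,R,A)/R > 0`. -/
def UpperPorousAt {X : Type*} [MetricSpace X] (A : Set X) (x : X) : Prop :=
  0 < Filter.limsup (fun R : ℝ => porosityGamma A x R / ENNReal.ofReal R) (𝓝[>] (0 : ℝ))

/-- `A` is upper porous if it is upper porous at each of its points. -/
def UpperPorous {X : Type*} [MetricSpace X] (A : Set X) : Prop :=
  ∀ x ∈ A, UpperPorousAt A x

/-- `A` is σ-upper porous if it is a countable union of upper porous sets. -/
def SigmaUpperPorous {X : Type*} [MetricSpace X] (A : Set X) : Prop :=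
  ∃ B : ℕ → Set X, (∀ n, UpperPorous (B n)) ∧ A = ⋃ n, B n

/-- `f` is Fréchet superdifferentiable at `x` if there is a continuous linear functional `φ`
with `limsup_{v→0} (f (x+v) - f x - φ v)/‖v‖ ≤ 0`. -/
def FrechetSuperdiffAt {X : Type*} [NormedAddCommGroup X] [NormedSpace ℝ X]
    (f : X → ℝ) (x : X) : Prop :=
  ∃ φ : X →L[ℝ] ℝ,
    Filter.limsup (fun v : X => (f (x + v) - f x - φ v) / ‖v‖) (𝓝[≠] (0 : X)) ≤ 0

/-- The auxiliary sets in Zajíček's proof. -/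
def ZSet {X : Type*} [NormedAddCommGroup X] [NormedSpace ℝ X]
    (G : Set X) (f : X → ℝ) (φ : X →L[ℝ] ℝ) (c δ : ℝ) : Set X :=
  {x | Metric.ball x δ ⊆ G ∧
       (∀ v : X, ‖v‖ < δ → f (x + v) - f x - φ v ≤ c / 4 * ‖v‖) ∧
       (∀ η > 0, ∃ v : X, 0 < ‖v‖ ∧ ‖v‖ < η ∧ f (x + v) - f x - φ v ≤ -c * ‖v‖)}

lemma le_porosityGamma {X : Type*} [MetricSpace X] {A : Set X} {x : X} {R : ℝ} (r : ℝ≥0)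
    (h : ∃ z : X, Metric.ball z (r : ℝ) ⊆ Metric.ball x R \ A) :
    (r : ℝ≥0∞) ≤ porosityGamma A x R :=
  le_iSup₂ (f := fun (r : ℝ≥0)
    (_ : ∃ z : X, Metric.ball z (r : ℝ) ⊆ Metric.ball x R \ A) => (r : ℝ≥0∞)) r h

lemma upperPorous_mono {X : Type*} [MetricSpace X] {A B : Set X}
    (hB : UpperPorous B) (hAB : A ⊆ B) : UpperPorous A := by
  intro x hx
  have h := hB x (hAB hx)
  refine lt_of_lt_of_le h (Filter.limsup_le_limsup (Filter.Eventually.of_forall fun R => ?_))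
  refine ENNReal.div_le_div_right ?_ _
  refine iSup_le fun r => iSup_le fun hr => ?_
  obtain ⟨z, hz⟩ := hr
  exact le_porosityGamma r ⟨z, hz.trans (diff_subset_diff_right hAB)⟩

set_option maxHeartbeats 1000000 in
lemma zset_upperPorous {X : Type*} [NormedAddCommGroup X] [NormedSpace ℝ X]
    {G : Set X} {f : X → ℝ} {K : ℝ≥0} (hf : LipschitzOnWith K f G)
    (φ : X →L[ℝ] ℝ) {c δ : ℝ} (hc : 0 < c) (hδ : 0 < δ) :
    UpperPorous (ZSet G f φ c δ) := by
  intro x hx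
  obtain ⟨hGx, hsup, hfreq⟩ := hx
  set M : ℝ := ‖φ‖ with hM
  have hM0 : 0 ≤ M := norm_nonneg _
  have hK0 : (0 : ℝ) ≤ K := K.coe_nonneg
  have hden : (0 : ℝ) < c + K + M + 1 := by positivity
  set lam : ℝ := c / (4 * (c + K + M + 1)) with hlam
  have hlam0 : 0 < lam := by positivity
  have hlamden : lam * (4 * (c + K + M + 1)) = c := by
    rw [hlam]; exact div_mul_cancel₀ _ (by positivity)
  have hlam1 : lam ≤ 1 / 4 := by
    rw [hlam, div_le_div_iff₀ (by positivity) (by norm_num)]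
    nlinarith
  have hlamMK : (M + K) * lam ≤ c / 4 := by
    have h1 : (M + K) * lam ≤ (c + K + M + 1) * lam :=
      mul_le_mul_of_nonneg_right (by linarith) hlam0.le
    nlinarith [hlamden]
  -- the key step: arbitrarily small good radii
  have key : ∀ η > 0, ∃ R : ℝ, 0 < R ∧ R < η ∧
      ENNReal.ofReal (lam / 2) ≤ porosityGamma (ZSet G f φ c δ) x R / ENNReal.ofReal R := by
    intro η hη
    obtain ⟨v, hv0, hvlt, hdrop⟩ := hfreq (min η δ / 2) (by positivity)
    have hvη : ‖v‖ < η / 2 := lt_of_lt_of_le hvlt (by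
      have := min_le_left η δ; linarith)
    have hvδ : ‖v‖ < δ / 2 := lt_of_lt_of_le hvlt (by
      have := min_le_right η δ; linarith)
    set ρ : ℝ := lam * ‖v‖ with hρ
    set R : ℝ := (1 + lam) * ‖v‖ with hR
    have hρ0 : 0 < ρ := by positivity
    have hρv : ρ ≤ ‖v‖ := by nlinarith [norm_nonneg v]
    have hR0 : 0 < R := by positivity
    have hρR : ρ + ‖v‖ = R := by rw [hρ, hR]; ring
    refine ⟨R, hR0, by nlinarith [norm_nonneg v], ?_⟩
    have hball : Metric.ball (x + v) ρ ⊆ Metric.ball x R \ ZSet G f φ c δ := by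
      intro y hy
      rw [Metric.mem_ball] at hy
      have hyxv : ‖y - (x + v)‖ < ρ := by rwa [← dist_eq_norm]
      have hyx : ‖y - x‖ < ρ + ‖v‖ := by
        have hx1 : y - x = (y - (x + v)) + v := by abel
        rw [hx1]
        calc ‖(y - (x + v)) + v‖ ≤ ‖y - (x + v)‖ + ‖v‖ := norm_add_le _ _
        _ < ρ + ‖v‖ := by linarith
      have hyx2 : ‖y - x‖ < 2 * ‖v‖ := by linarith
      constructor
      · rw [Metric.mem_ball, dist_eq_norm]
        linarith
      · intro hyB
        obtain ⟨hGy, hsupy, -⟩ := hyB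
        have hxyδ : ‖x - y‖ < δ := by
          rw [norm_sub_rev]; linarith
        have h1 : f x - f y - φ (x - y) ≤ c / 4 * ‖x - y‖ := by
          have h := hsupy (x - y) hxyδ
          have hxx : y + (x - y) = x := by abel
          rwa [hxx] at h
        have hyG : y ∈ G := hGx (by
          rw [Metric.mem_ball, dist_eq_norm]; linarith)
        have hxvG : x + v ∈ G := hGx (by
          rw [Metric.mem_ball, dist_eq_norm, add_sub_cancel_left]; linarith)
        have h2 : f y - f (x + v) ≤ (K : ℝ) * ρ := by
          have h := hf.dist_le_mul y hyG (x + v) hxvG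
          rw [Real.dist_eq, dist_eq_norm] at h
          have h' : (K : ℝ) * ‖y - (x + v)‖ ≤ (K : ℝ) * ρ :=
            mul_le_mul_of_nonneg_left hyxv.le hK0
          have := (abs_le.1 (h.trans h')).2
          linarith
        have h3 : φ ((x + v) - y) ≤ M * ρ := by
          have h := (φ.le_opNorm ((x + v) - y))
          have h' : ‖(x + v) - y‖ ≤ ρ := by rw [norm_sub_rev]; linarith
          have h'' : M * ‖(x + v) - y‖ ≤ M * ρ := mul_le_mul_of_nonneg_left h' hM0
          rw [Real.norm_eq_abs] at h
          calc φ ((x + v) - y) ≤ |φ ((x + v) - y)| := le_abs_self _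
          _ ≤ M * ‖(x + v) - y‖ := h
          _ ≤ M * ρ := h''
        have h4 : φ (x - y) + φ v = φ ((x + v) - y) := by
          rw [← map_add]; congr 1; abel
        have h5 : ‖x - y‖ ≤ 2 * ‖v‖ := by rw [norm_sub_rev]; linarith
        -- combine into a contradiction
        have e1 : c * ‖v‖ ≤ φ ((x + v) - y) + (K : ℝ) * ρ + c / 4 * ‖x - y‖ := by
          linarith [hdrop]
        have e2 : c / 4 * ‖x - y‖ ≤ c / 4 * (2 * ‖v‖) :=
          mul_le_mul_of_nonneg_left h5 (by positivity)
        have e3 : (M + K) * ρ ≤ c / 4 * ‖v‖ := by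
          rw [hρ]
          calc (M + K) * (lam * ‖v‖) = ((M + K) * lam) * ‖v‖ := by ring
          _ ≤ c / 4 * ‖v‖ := mul_le_mul_of_nonneg_right hlamMK (norm_nonneg v)
        have hcv : 0 < c * ‖v‖ := mul_pos hc hv0
        linarith [e1, e2, e3, h3, hcv]
    -- lower-bound porosityGamma
    have hγ : ENNReal.ofReal ρ ≤ porosityGamma (ZSet G f φ c δ) x R := by
      have hcoe : ((ρ.toNNReal : ℝ≥0) : ℝ) = ρ := Real.coe_toNNReal ρ hρ0.le
      have h := le_porosityGamma (A := ZSet G f φ c δ) (x := x) (R := R) ρ.toNNReal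
        ⟨x + v, by rw [hcoe]; exact hball⟩
      exact h
    rw [ENNReal.le_div_iff_mul_le (Or.inl (ne_of_gt (ENNReal.ofReal_pos.2 hR0)))
      (Or.inl ENNReal.ofReal_ne_top)]
    calc ENNReal.ofReal (lam / 2) * ENNReal.ofReal R = ENNReal.ofReal (lam / 2 * R) :=
          (ENNReal.ofReal_mul (by positivity)).symm
    _ ≤ ENNReal.ofReal ρ := by
          refine ENNReal.ofReal_le_ofReal ?_
          rw [hR, hρ]
          nlinarith [mul_nonneg hlam0.le (norm_nonneg v), norm_nonneg v, hlam1]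
    _ ≤ _ := hγ
  -- conclude positivity of the limsup
  have hfr : ∃ᶠ R in 𝓝[>] (0 : ℝ),
      ENNReal.ofReal (lam / 2) ≤ porosityGamma (ZSet G f φ c δ) x R / ENNReal.ofReal R := by
    rw [Filter.frequently_iff]
    intro U hU
    obtain ⟨u', hu', hsub⟩ := mem_nhdsGT_iff_exists_Ioo_subset.1 hU
    obtain ⟨R, hR0, hRlt, hRle⟩ := key u' hu'
    exact ⟨R, hsub ⟨hR0, hRlt⟩, hRle⟩
  have hle := Filter.le_limsup_of_frequently_le hfr
    ⟨⊤, Filter.Eventually.of_forall fun _ => le_top⟩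
  exact lt_of_lt_of_le (ENNReal.ofReal_pos.2 (by positivity)) hle

set_option maxHeartbeats 1000000 in
lemma zset_cover {X : Type*} [NormedAddCommGroup X] [NormedSpace ℝ X]
    {G : Set X} (hG : IsOpen G) {f : X → ℝ} {K : ℝ≥0} (hf : LipschitzOnWith K f G)
    {u : ℕ → StrongDual ℝ X} (hu : DenseRange u) {x : X} (hxG : x ∈ G)
    (hsd : FrechetSuperdiffAt f x) (hnd : ¬ DifferentiableAt ℝ f x) :
    ∃ m p q : ℕ, x ∈ ZSet G f (u m) (1 / (p + 1)) (1 / (q + 1)) := by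
  obtain ⟨φ, hφ⟩ := hsd
  obtain ⟨δ0, hδ0, hδ0G⟩ := Metric.isOpen_iff.1 hG x hxG
  -- boundedness of the difference quotient near 0
  have hbd : ∀ᶠ v in 𝓝[≠] (0 : X),
      (f (x + v) - f x - φ v) / ‖v‖ ≤ (K : ℝ) + ‖φ‖ := by
    filter_upwards [self_mem_nhdsWithin,
      mem_nhdsWithin_of_mem_nhds (Metric.ball_mem_nhds (0 : X) hδ0)] with v hv0 hvb
    have hvne : v ≠ 0 := hv0
    have hv0' : (0 : ℝ) < ‖v‖ := norm_pos_iff.2 hvne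
    have hvδ : ‖v‖ < δ0 := by rwa [Metric.mem_ball, dist_zero_right] at hvb
    have hxvG : x + v ∈ G := hδ0G (by
      rw [Metric.mem_ball, dist_eq_norm, add_sub_cancel_left]; exact hvδ)
    have h1 : f (x + v) - f x ≤ (K : ℝ) * ‖v‖ := by
      have h := hf.dist_le_mul (x + v) hxvG x hxG
      rw [Real.dist_eq, dist_eq_norm, add_sub_cancel_left] at h
      linarith [(abs_le.1 h).2]
    have h2 : -(‖φ‖ * ‖v‖) ≤ φ v := by
      have h := φ.le_opNorm v
      rw [Real.norm_eq_abs] at h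
      exact (abs_le.1 h).1
    rw [div_le_iff₀ hv0']
    nlinarith
  have hbdU : Filter.IsBoundedUnder (· ≤ ·) (𝓝[≠] (0 : X))
      (fun v : X => (f (x + v) - f x - φ v) / ‖v‖) :=
    ⟨(K : ℝ) + ‖φ‖, by simpa [Filter.eventually_map] using hbd⟩
  -- existence of a definite drop
  have hdropEx : ∃ c > 0, ∀ η > 0, ∃ v : X, 0 < ‖v‖ ∧ ‖v‖ < η ∧
      f (x + v) - f x - φ v ≤ -c * ‖v‖ := by
    by_contra hcon
    push_neg at hcon
    apply hnd
    have hF : HasFDerivAt f φ x := by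
      rw [hasFDerivAt_iff_isLittleO_nhds_zero, Asymptotics.isLittleO_iff]
      intro ε hε
      have hup : ∀ᶠ v in 𝓝[≠] (0 : X), (f (x + v) - f x - φ v) / ‖v‖ < ε :=
        Filter.eventually_lt_of_limsup_lt (lt_of_le_of_lt hφ hε) hbdU
      obtain ⟨η, hη, hlow⟩ := hcon ε hε
      have hdn : ∀ᶠ v in 𝓝[≠] (0 : X), -ε * ‖v‖ < f (x + v) - f x - φ v := by
        filter_upwards [self_mem_nhdsWithin,
          mem_nhdsWithin_of_mem_nhds (Metric.ball_mem_nhds (0 : X) hη)] with v hv0 hvb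
        have hvne : v ≠ 0 := hv0
        have hv0' : (0 : ℝ) < ‖v‖ := norm_pos_iff.2 hvne
        have hvη : ‖v‖ < η := by rwa [Metric.mem_ball, dist_zero_right] at hvb
        exact hlow v hv0' hvη
      have hcomb : ∀ᶠ v in 𝓝[≠] (0 : X), ‖f (x + v) - f x - φ v‖ ≤ ε * ‖v‖ := by
        filter_upwards [hup, hdn, self_mem_nhdsWithin] with v h1 h2 hv0
        have hvne : v ≠ 0 := hv0
        have hv0' : (0 : ℝ) < ‖v‖ := norm_pos_iff.2 hvne
        rw [Real.norm_eq_abs, abs_le]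
        rw [div_lt_iff₀ hv0'] at h1
        constructor <;> linarith
      rw [← nhdsNE_sup_pure, Filter.eventually_sup]
      refine ⟨hcomb, ?_⟩
      simp
    exact hF.differentiableAt
  obtain ⟨c, hc, hdrop⟩ := hdropEx
  -- choose p with 1/(p+1) ≤ c/2
  obtain ⟨p, hp⟩ := exists_nat_ge (2 / c)
  have hcp0 : (0 : ℝ) < 1 / ((p : ℝ) + 1) := by positivity
  have hcpc : 1 / ((p : ℝ) + 1) ≤ c / 2 := by
    rw [div_le_div_iff₀ (by positivity) (by norm_num)]
    rw [div_le_iff₀ hc] at hp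
    nlinarith
  set cp : ℝ := 1 / ((p : ℝ) + 1) with hcpdef
  -- choose m with ‖φ - u m‖ < cp/8
  obtain ⟨m, hm⟩ := Metric.denseRange_iff.1 hu φ (cp / 8) (by positivity)
  rw [dist_eq_norm] at hm
  -- superdifferentiability estimate at scale cp/8
  have hup : ∀ᶠ v in 𝓝[≠] (0 : X), (f (x + v) - f x - φ v) / ‖v‖ < cp / 8 :=
    Filter.eventually_lt_of_limsup_lt (lt_of_le_of_lt hφ (by positivity)) hbdU
  obtain ⟨δ1, hδ1, hδ1'⟩ := Metric.mem_nhdsWithin_iff.1 hup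
  -- choose q with 1/(q+1) ≤ min δ0 δ1
  have hmin : 0 < min δ0 δ1 := lt_min hδ0 hδ1
  obtain ⟨q, hq⟩ := exists_nat_ge (1 / min δ0 δ1)
  have hδq0 : (0 : ℝ) < 1 / ((q : ℝ) + 1) := by positivity
  have hδq : 1 / ((q : ℝ) + 1) ≤ min δ0 δ1 := by
    rw [div_le_iff₀ (by positivity)]
    rw [div_le_iff₀ hmin] at hq
    nlinarith
  set δq : ℝ := 1 / ((q : ℝ) + 1) with hδqdef
  have hδq0' : δq ≤ δ0 := hδq.trans (min_le_left _ _)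
  have hδq1 : δq ≤ δ1 := hδq.trans (min_le_right _ _)
  have hφm : ∀ v : X, |φ v - u m v| ≤ cp / 8 * ‖v‖ := by
    intro v
    have h := (φ - u m).le_opNorm v
    rw [ContinuousLinearMap.sub_apply] at h
    exact h.trans (mul_le_mul_of_nonneg_right hm.le (norm_nonneg v))
  refine ⟨m, p, q, (Metric.ball_subset_ball hδq0').trans hδ0G, ?_, ?_⟩
  · intro v hv
    rcases eq_or_ne v 0 with rfl | hv0
    · simp
    · have hv0' : (0 : ℝ) < ‖v‖ := norm_pos_iff.2 hv0
      have hq2 : (f (x + v) - f x - φ v) / ‖v‖ < cp / 8 :=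
        hδ1' ⟨by rw [Metric.mem_ball, dist_zero_right]; exact lt_of_lt_of_le hv hδq1,
          Set.mem_compl_singleton_iff.2 hv0⟩
      rw [div_lt_iff₀ hv0'] at hq2
      have h2 := (abs_le.1 (hφm v)).2
      have hgoal : f (x + v) - f x - u m v ≤ cp / 4 * ‖v‖ := by linarith
      exact hgoal
  · intro η hη
    obtain ⟨v, hv0, hvη, hvd⟩ := hdrop η hη
    refine ⟨v, hv0, hvη, ?_⟩
    have h2 := (abs_le.1 (hφm v)).2
    have h3 : cp * ‖v‖ ≤ c / 2 * ‖v‖ := mul_le_mul_of_nonneg_right hcpc (norm_nonneg v)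
    have h4 : 0 < cp * ‖v‖ := mul_pos hcp0 hv0
    have hgoal : f (x + v) - f x - u m v ≤ -cp * ‖v‖ := by linarith
    exact hgoal

/-- Zajíček's theorem: for a Lipschitz function on an open subset of a Banach space with
separable dual, the set of points of Fréchet superdifferentiability but not Fréchet
differentiability is σ-upper porous. -/
theorem sigmaUpperPorous_superdiff_not_diff_of_separable_dual
    {X : Type*} [NormedAddCommGroup X] [NormedSpace ℝ X] [CompleteSpace X]
    (hsep : TopologicalSpace.SeparableSpace (StrongDual ℝ X))
    (G : Set X) (hG : IsOpen G) (f : X → ℝ) (hf : ∃ K : ℝ≥0, LipschitzOnWith K f G) :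
    SigmaUpperPorous
      {x : X | x ∈ G ∧ FrechetSuperdiffAt f x ∧ ¬ DifferentiableAt ℝ f x} := by
  obtain ⟨K, hf⟩ := hf
  obtain ⟨u, hu⟩ := TopologicalSpace.exists_dense_seq (StrongDual ℝ X)
  set A := {x : X | x ∈ G ∧ FrechetSuperdiffAt f x ∧ ¬ DifferentiableAt ℝ f x} with hA
  let e : (ℕ × ℕ × ℕ) ≃ ℕ := Denumerable.eqv (ℕ × ℕ × ℕ)
  refine ⟨fun n => A ∩ ZSet G f (u (e.symm n).1) (1 / (((e.symm n).2.1 : ℝ) + 1))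
    (1 / (((e.symm n).2.2 : ℝ) + 1)), fun n => ?_, ?_⟩
  · exact upperPorous_mono (zset_upperPorous hf _ (by positivity) (by positivity))
      inter_subset_right
  · ext x
    simp only [Set.mem_iUnion, Set.mem_inter_iff]
    constructor
    · intro hx
      obtain ⟨m, p, q, hz⟩ := zset_cover hG hf hu hx.1 hx.2.1 hx.2.2
      refine ⟨e (m, p, q), hx, ?_⟩
      simpa using hz
    · rintro ⟨n, hn, -⟩
      exact hn
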